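/- Let ρ be a separable density operator on ℂᵐ ⊗ ℂⁿ, and let Π_V be the orthogonal projection onto a subspace V. Then Tr(ρ Π_V) ≤ Λ, where Λ is the supremum over unit vectors Ψ ∈ V of the square of the largest Schmidt coefficient of Ψ. -/

import Mathlib

open Matrix

/-- Sort a finite tuple of reals in non-increasing order. -/
noncomputable def descSort {n : ℕ} (f : Fin n → ℝ) : Fin n → ℝ :=
  fun i => f (Tuple.sort f i.rev)

/-- Coefficient matrix of a vector in `ℂᵐ ⊗ ℂⁿ`. -/
def coefMat {m n : ℕ} (ψ : Fin m × Fin n → ℂ) : Matrix (Fin m) (Fin n) ℂ :=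
  Matrix.of fun i j => ψ (i, j)

/-- Squared Schmidt coefficients of `ψ`, in non-increasing order. -/
noncomputable def schmidtSq {m n : ℕ} (ψ : Fin m × Fin n → ℂ) : Fin n → ℝ :=
  descSort fun i =>
    (Matrix.isHermitian_conjTranspose_mul_self (coefMat ψ)).eigenvalues i

/-- The square of the largest Schmidt coefficient of `ψ`. -/
noncomputable def topSchmidtSq {m n : ℕ} (ψ : Fin m × Fin n → ℂ) : ℝ :=
  ⨆ i, schmidtSq ψ i

/-- A state on `ℂᵐ ⊗ ℂⁿ` is separable if it is a convex combination of
pure product states. -/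
def IsSeparableState {m n : ℕ} (ρ : Matrix (Fin m × Fin n) (Fin m × Fin n) ℂ) : Prop :=
  ∃ (N : ℕ) (p : Fin N → ℝ) (a : Fin N → Fin m → ℂ) (b : Fin N → Fin n → ℂ),
    (∀ k, 0 ≤ p k) ∧ (∑ k, p k = 1) ∧
    (∀ k, ∑ i, ‖a k i‖ ^ 2 = 1) ∧
    (∀ k, ∑ j, ‖b k j‖ ^ 2 = 1) ∧
    ρ = ∑ k, (p k : ℂ) •
      Matrix.vecMulVec (fun x => a k x.1 * b k x.2) (star fun x => a k x.1 * b k x.2)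

lemma star_dot_self {ι : Type*} [Fintype ι] (w : ι → ℂ) :
    star w ⬝ᵥ w = ((∑ j, ‖w j‖ ^ 2 : ℝ) : ℂ) := by
  simp only [dotProduct, Pi.star_apply, Complex.star_def, Complex.conj_mul',
    Complex.ofReal_sum, Complex.ofReal_pow]

lemma iSup_descSort {n : ℕ} [NeZero n] (g : Fin n → ℝ) :
    (⨆ i, descSort g i) = ⨆ i, g i := by
  unfold descSort
  apply le_antisymm
  · exact ciSup_le fun i => le_ciSup (Set.Finite.bddAbove (Set.finite_range g)) _
  · refine ciSup_le fun j => ?_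
    have h1 : g j = g (Tuple.sort g (((Tuple.sort g)⁻¹ j).rev).rev) := by
      rw [Fin.rev_rev]; simp
    rw [h1]
    exact le_ciSup (Set.Finite.bddAbove (Set.finite_range fun i => g (Tuple.sort g i.rev)))
      (((Tuple.sort g)⁻¹ j).rev)

lemma topSchmidtSq_eq {m n : ℕ} [NeZero n] (φ : Fin m × Fin n → ℂ) :
    topSchmidtSq φ
      = ⨆ i, (Matrix.isHermitian_conjTranspose_mul_self (coefMat φ)).eigenvalues i := by
  have h : schmidtSq φ = descSort
      (fun i => (Matrix.isHermitian_conjTranspose_mul_self (coefMat φ)).eigenvalues i) := rfl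
  rw [topSchmidtSq, h, iSup_descSort]

lemma sum_eigen {k l : ℕ} (C : Matrix (Fin k) (Fin l) ℂ) :
    ∑ i, (Matrix.isHermitian_conjTranspose_mul_self C).eigenvalues i
      = ∑ j, ∑ i, ‖C i j‖ ^ 2 := by
  classical
  set hC := Matrix.isHermitian_conjTranspose_mul_self C
  have h1 : (Cᴴ * C).trace
      = ((∑ i, hC.eigenvalues i : ℝ) : ℂ) := by
    conv_lhs => rw [hC.spectral_theorem, Unitary.conjStarAlgAut_apply]
    rw [trace_mul_cycle]
    have hUU : star (hC.eigenvectorUnitary : Matrix (Fin l) (Fin l) ℂ)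
        * (hC.eigenvectorUnitary : Matrix (Fin l) (Fin l) ℂ) = 1 :=
      mem_unitaryGroup_iff'.mp hC.eigenvectorUnitary.2
    rw [hUU, one_mul, trace_diagonal, Complex.ofReal_sum]
    rfl
  have h2 : (Cᴴ * C).trace = ((∑ j, ∑ i, ‖C i j‖ ^ 2 : ℝ) : ℂ) := by
    simp only [Matrix.trace, Matrix.diag_apply, Matrix.mul_apply, Matrix.conjTranspose_apply,
      Complex.star_def, Complex.conj_mul',
      Complex.ofReal_sum, Complex.ofReal_pow]
  exact_mod_cast h1.symm.trans h2

lemma rayleigh {k : ℕ} [NeZero k] {A : Matrix (Fin k) (Fin k) ℂ} (hA : A.IsHermitian)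
    (x : Fin k → ℂ) :
    (star x ⬝ᵥ A *ᵥ x).re ≤ (⨆ i, hA.eigenvalues i) * (∑ j, ‖x j‖ ^ 2) := by
  classical
  set U : Matrix (Fin k) (Fin k) ℂ := (hA.eigenvectorUnitary : Matrix (Fin k) (Fin k) ℂ) with hU
  have hUU : U * star U = 1 := (mem_unitaryGroup_iff).mp hA.eigenvectorUnitary.2
  set y : Fin k → ℂ := star U *ᵥ x with hy
  have hyst : star x ᵥ* U = star y := by
    rw [hy, star_mulVec, star_eq_conjTranspose U, conjTranspose_conjTranspose]
  have key : star x ⬝ᵥ A *ᵥ x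
      = star y ⬝ᵥ (diagonal (RCLike.ofReal ∘ hA.eigenvalues)) *ᵥ y := by
    conv_lhs => rw [hA.spectral_theorem, Unitary.conjStarAlgAut_apply]
    rw [← mulVec_mulVec, ← mulVec_mulVec, dotProduct_mulVec, hyst]
  have hnorm : (∑ j, ‖y j‖ ^ 2) = ∑ j, ‖x j‖ ^ 2 := by
    have h1 : star y ⬝ᵥ y = star x ⬝ᵥ x := by
      rw [← hyst, ← dotProduct_mulVec, hy, mulVec_mulVec, hUU, one_mulVec]
    rw [star_dot_self, star_dot_self] at h1
    exact_mod_cast h1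
  rw [key]
  have hdiag : (star y ⬝ᵥ (diagonal (RCLike.ofReal ∘ hA.eigenvalues)) *ᵥ y).re
      = ∑ i, hA.eigenvalues i * ‖y i‖ ^ 2 := by
    simp only [dotProduct, mulVec_diagonal, Function.comp_apply, Pi.star_apply,
      Complex.star_def]
    rw [Complex.re_sum]
    congr 1; ext i
    have h2 : (starRingEnd ℂ) (y i) * ((RCLike.ofReal (hA.eigenvalues i) : ℂ) * y i)
        = ((hA.eigenvalues i * ‖y i‖ ^ 2 : ℝ) : ℂ) := by
      have h3 : (RCLike.ofReal (hA.eigenvalues i) : ℂ) = ((hA.eigenvalues i : ℝ) : ℂ) := rfl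
      rw [h3, show (starRingEnd ℂ) (y i) * (((hA.eigenvalues i : ℝ) : ℂ) * y i)
        = ((hA.eigenvalues i : ℝ) : ℂ) * ((starRingEnd ℂ) (y i) * y i) from by ring,
        Complex.conj_mul']
      push_cast; ring
    rw [h2, Complex.ofReal_re]
  rw [hdiag, ← hnorm, Finset.mul_sum]
  refine Finset.sum_le_sum fun i _ => ?_
  exact mul_le_mul_of_nonneg_right
    (le_ciSup (Set.Finite.bddAbove (Set.finite_range _)) i) (by positivity)

lemma cauchy_dot {k : ℕ} (a w : Fin k → ℂ) :
    ‖star a ⬝ᵥ w‖ ^ 2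
      ≤ (∑ i, ‖a i‖ ^ 2) * (∑ i, ‖w i‖ ^ 2) := by
  have h := norm_inner_le_norm (𝕜 := ℂ) ((WithLp.equiv 2 (Fin k → ℂ)).symm a)
    ((WithLp.equiv 2 (Fin k → ℂ)).symm w)
  replace h : ‖star a ⬝ᵥ w‖ ≤ ‖(WithLp.equiv 2 (Fin k → ℂ)).symm a‖ * ‖(WithLp.equiv 2 (Fin k → ℂ)).symm w‖ := by
    rw [dotProduct_comm]; exact h
  have hs : ∀ v : Fin k → ℂ,
      ‖(WithLp.equiv 2 (Fin k → ℂ)).symm v‖ ^ 2 = ∑ i, ‖v i‖ ^ 2 := by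
    intro v
    rw [EuclideanSpace.norm_eq, Real.sq_sqrt (by positivity)]
    simp
  calc ‖star a ⬝ᵥ w‖ ^ 2
      ≤ (‖(WithLp.equiv 2 (Fin k → ℂ)).symm a‖ * ‖(WithLp.equiv 2 (Fin k → ℂ)).symm w‖) ^ 2 := by
        exact pow_le_pow_left₀ (norm_nonneg _) h 2
    _ = _ := by rw [mul_pow, hs, hs]

lemma overlap_le {m n : ℕ} [NeZero m] [NeZero n] (a : Fin m → ℂ) (b : Fin n → ℂ)
    (ha : ∑ i, ‖a i‖ ^ 2 = 1) (hb : ∑ j, ‖b j‖ ^ 2 = 1)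
    (φ : Fin m × Fin n → ℂ) :
    ‖(star fun x : Fin m × Fin n => a x.1 * b x.2) ⬝ᵥ φ‖ ^ 2
      ≤ topSchmidtSq φ := by
  set C := coefMat φ with hC
  set u : Fin n → ℂ := star b with hu
  have hun : ∑ j, ‖u j‖ ^ 2 = 1 := by
    rw [← hb]; congr 1; ext j; rw [hu]; simp
  have h1 : (star fun x : Fin m × Fin n => a x.1 * b x.2) ⬝ᵥ φ = star a ⬝ᵥ (C *ᵥ u) := by
    simp only [dotProduct, mulVec, dotProduct, Pi.star_apply, star_mul',
      Fintype.sum_prod_type, hC, coefMat, Matrix.of_apply, hu, Finset.mul_sum]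
    congr 1; ext i; congr 1; ext j; ring
  rw [h1]
  have h2 := cauchy_dot a (C *ᵥ u)
  rw [ha, one_mul] at h2
  have h3 : star u ⬝ᵥ ((Cᴴ * C) *ᵥ u)
      = ((∑ i, ‖(C *ᵥ u) i‖ ^ 2 : ℝ) : ℂ) := by
    rw [← mulVec_mulVec, dotProduct_mulVec, ← star_mulVec, star_dot_self]
  have h4 : (∑ i, ‖(C *ᵥ u) i‖ ^ 2) = (star u ⬝ᵥ ((Cᴴ * C) *ᵥ u)).re := by
    rw [h3, Complex.ofReal_re]
  have h5 := rayleigh (Matrix.isHermitian_conjTranspose_mul_self C) u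
  rw [hun, mul_one] at h5
  rw [topSchmidtSq_eq]
  calc ‖star a ⬝ᵥ C *ᵥ u‖ ^ 2 ≤ _ := h2
    _ ≤ _ := by rw [h4]; exact h5

lemma trace_vecMulVec_mul {ι : Type*} [Fintype ι] (v w : ι → ℂ) (P : Matrix ι ι ℂ) :
    (vecMulVec v w * P).trace = w ⬝ᵥ (P *ᵥ v) := by
  simp only [Matrix.trace, Matrix.diag_apply, Matrix.mul_apply, vecMulVec_apply,
    dotProduct, mulVec, dotProduct, Finset.mul_sum]
  rw [Finset.sum_comm]
  congr 1; ext j; congr 1; ext i; ring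

lemma topSchmidtSq_nonneg {m n : ℕ} [NeZero n] (φ : Fin m × Fin n → ℂ) :
    0 ≤ topSchmidtSq φ := by
  rw [topSchmidtSq_eq]
  have i0 : Fin n := ⟨0, Nat.pos_of_ne_zero (NeZero.ne n)⟩
  exact le_trans (Matrix.eigenvalues_conjTranspose_mul_self_nonneg (coefMat φ) i0)
    (le_ciSup (Set.Finite.bddAbove (Set.finite_range _)) i0)

lemma topSchmidtSq_le_one {m n : ℕ} [NeZero n] (φ : Fin m × Fin n → ℂ)
    (hφ : ∑ p, ‖φ p‖ ^ 2 = 1) : topSchmidtSq φ ≤ 1 := by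
  rw [topSchmidtSq_eq]
  refine ciSup_le fun j => ?_
  have h1 : ∑ i, (Matrix.isHermitian_conjTranspose_mul_self (coefMat φ)).eigenvalues i = 1 := by
    rw [sum_eigen, Finset.sum_comm, ← hφ, Fintype.sum_prod_type]
    rfl
  calc (Matrix.isHermitian_conjTranspose_mul_self (coefMat φ)).eigenvalues j
      ≤ ∑ i, (Matrix.isHermitian_conjTranspose_mul_self (coefMat φ)).eigenvalues i :=
        Finset.single_le_sum
          (fun i _ => Matrix.eigenvalues_conjTranspose_mul_self_nonneg (coefMat φ) i)
          (Finset.mem_univ j)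
    _ = 1 := h1

set_option maxHeartbeats 1000000 in
lemma pointwise_bound {m n : ℕ} [NeZero m] [NeZero n]
    (P : Matrix (Fin m × Fin n) (Fin m × Fin n) ℂ)
    (hP : P.IsHermitian) (hP2 : P * P = P)
    (S : Set ℝ)
    (hS : S = {x : ℝ | ∃ ψ : Fin m × Fin n → ℂ, P *ᵥ ψ = ψ ∧
      (∑ p, ‖ψ p‖ ^ 2 = 1) ∧ x = topSchmidtSq ψ})
    (a : Fin m → ℂ) (b : Fin n → ℂ)
    (ha : ∑ i, ‖a i‖ ^ 2 = 1) (hb : ∑ j, ‖b j‖ ^ 2 = 1) :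
    ((star fun x : Fin m × Fin n => a x.1 * b x.2) ⬝ᵥ
      (P *ᵥ fun x : Fin m × Fin n => a x.1 * b x.2)).re ≤ sSup S := by
  have hSbdd : BddAbove S := by
    refine ⟨1, fun x hx => ?_⟩
    rw [hS] at hx
    obtain ⟨ψ, _, hψ1, rfl⟩ := hx
    exact topSchmidtSq_le_one ψ hψ1
  have hSup0 : 0 ≤ sSup S := by
    rcases Set.eq_empty_or_nonempty S with h | h
    · rw [h, Real.sSup_empty]
    · obtain ⟨x, hx⟩ := h
      have hx0 : 0 ≤ x := by
        have hx' := hx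
        rw [hS] at hx'
        obtain ⟨ψ, _, _, rfl⟩ := hx'
        exact topSchmidtSq_nonneg ψ
      exact le_trans hx0 (le_csSup hSbdd hx)
  set vv : Fin m × Fin n → ℂ := fun x => a x.1 * b x.2 with hvv
  have hPform : Pᴴ * P = P := by rw [hP]; exact hP2
  have hreal : star vv ⬝ᵥ (P *ᵥ vv)
      = ((∑ j, ‖(P *ᵥ vv) j‖ ^ 2 : ℝ) : ℂ) := by
    conv_lhs => rw [← hPform]
    rw [← mulVec_mulVec, dotProduct_mulVec, ← star_mulVec, star_dot_self]
  rw [hreal, Complex.ofReal_re]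
  set c : ℝ := ∑ j, ‖(P *ᵥ vv) j‖ ^ 2 with hc
  have hc0 : 0 ≤ c := by positivity
  rcases eq_or_lt_of_le hc0 with h0 | h0
  · rw [← h0]; exact hSup0
  · set s : ℝ := Real.sqrt c with hs
    have hs0 : 0 < s := Real.sqrt_pos.mpr h0
    have hs2 : s ^ 2 = c := Real.sq_sqrt hc0
    set φ : Fin m × Fin n → ℂ := ((s⁻¹ : ℝ) : ℂ) • (P *ᵥ vv) with hφ
    have hPφ : P *ᵥ φ = φ := by
      rw [hφ, mulVec_smul, mulVec_mulVec, hP2]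
    have habs : ∀ q, ‖φ q‖ ^ 2 = s⁻¹ ^ 2 * ‖(P *ᵥ vv) q‖ ^ 2 := by
      intro q
      rw [hφ]
      simp only [Pi.smul_apply, smul_eq_mul, norm_mul, mul_pow, Complex.norm_real, Real.norm_eq_abs]
      rw [abs_of_pos (inv_pos.mpr hs0)]
    have hφ1 : ∑ q, ‖φ q‖ ^ 2 = 1 := by
      rw [Finset.sum_congr rfl fun q _ => habs q, ← Finset.mul_sum, ← hc, inv_pow, hs2]
      exact inv_mul_cancel₀ (ne_of_gt h0)
    have hmem : topSchmidtSq φ ∈ S := by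
      rw [hS]; exact ⟨φ, hPφ, hφ1, rfl⟩
    have h8 : star vv ⬝ᵥ φ = ((s⁻¹ * c : ℝ) : ℂ) := by
      rw [hφ, dotProduct_smul, hreal, smul_eq_mul, ← Complex.ofReal_mul]
    clear_value φ
    have h7 := overlap_le a b ha hb φ
    rw [← hvv] at h7
    rw [h8] at h7
    rw [Complex.norm_real, Real.norm_eq_abs, abs_of_nonneg (le_of_lt (mul_pos (inv_pos.mpr hs0) h0)), mul_pow] at h7
    have h9 : (s⁻¹) ^ 2 * c ^ 2 = c := by
      rw [inv_pow, hs2]; field_simp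
    rw [h9] at h7
    exact le_trans h7 (le_csSup hSbdd hmem)


/-- Separability criterion: a separable state satisfies `Tr(ρ Π_V) ≤ Λ`. -/
theorem stmt10 {m n : ℕ} (hmn : m ≤ n)
    (ρ P : Matrix (Fin m × Fin n) (Fin m × Fin n) ℂ)
    (hρ : IsSeparableState ρ)
    (hP : P.IsHermitian) (hP2 : P * P = P)
    (Λ : ℝ)
    (hΛ : Λ = sSup {x : ℝ | ∃ ψ : Fin m × Fin n → ℂ, P *ᵥ ψ = ψ ∧
      (∑ p, ‖ψ p‖ ^ 2 = 1) ∧ x = topSchmidtSq ψ}) :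
    ((ρ * P).trace).re ≤ Λ := by
  obtain ⟨N, p, a, b, hp0, hp1, ha, hb, hρeq⟩ := hρ
  have hN : N ≠ 0 := by rintro rfl; simp at hp1
  have k0 : Fin N := ⟨0, Nat.pos_of_ne_zero hN⟩
  haveI hm : NeZero m := ⟨by rintro rfl; simpa using ha k0⟩
  haveI hn : NeZero n := ⟨by rintro rfl; simpa using hb k0⟩
  have htr : (ρ * P).trace = ∑ k, (p k : ℂ) *
      ((star fun x : Fin m × Fin n => a k x.1 * b k x.2) ⬝ᵥ
        (P *ᵥ fun x : Fin m × Fin n => a k x.1 * b k x.2)) := by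
    rw [hρeq, Finset.sum_mul, trace_sum]
    refine Finset.sum_congr rfl fun k _ => ?_
    rw [smul_mul_assoc, trace_smul, trace_vecMulVec_mul, smul_eq_mul]
  rw [htr, Complex.re_sum]
  have hbd : ∀ k, (p k * ((star fun x : Fin m × Fin n => a k x.1 * b k x.2) ⬝ᵥ
      (P *ᵥ fun x : Fin m × Fin n => a k x.1 * b k x.2))).re ≤ p k * Λ := by
    intro k
    rw [Complex.re_ofReal_mul]
    exact mul_le_mul_of_nonneg_left
      (hΛ ▸ pointwise_bound P hP hP2 _ rfl (a k) (b k) (ha k) (hb k)) (hp0 k)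
  calc ∑ k, (↑(p k) * ((star fun x : Fin m × Fin n => a k x.1 * b k x.2) ⬝ᵥ
      (P *ᵥ fun x : Fin m × Fin n => a k x.1 * b k x.2))).re
      ≤ ∑ k, p k * Λ := Finset.sum_le_sum fun k _ => hbd k
    _ = Λ := by rw [← Finset.sum_mul, hp1, one_mul]
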